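/- arXiv:0707.4502 — 4 statements merged into one kernel-verified Lean document; each statement's English description precedes it below -/
import Mathlib

section
/- Let φ(t) = (t^{v₀}, y(t)) with ord y = v₁, gcd(v₀, v₁) = 1. If y(t) = t^{v₁} (the monomial parametrization), then Λ_φ \ Γ_φ = ∅; that is, every value v_φ(h dX + g dY) of a differential with nonzero pullback lies in the semigroup ⟨v₀, v₁⟩. -/
open PowerSeries

/-- Substitution of a pair of one-variable power series (with zero constant term)
into a two-variable power series: `h ↦ h(x(t), y(t))`. -/
noncomputable def psubst (x y : PowerSeries ℂ) (h : MvPowerSeries (Fin 2) ℂ) : PowerSeries ℂ :=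
  PowerSeries.mk fun n =>
    ∑ p ∈ Finset.range (n + 1) ×ˢ Finset.range (n + 1),
      MvPowerSeries.coeff (Finsupp.single (0 : Fin 2) p.1 + Finsupp.single (1 : Fin 2) p.2) h
        * PowerSeries.coeff n (x ^ p.1 * y ^ p.2)

lemma psubst_coeff_support (v₀ v₁ : ℕ) (h : MvPowerSeries (Fin 2) ℂ) (i : ℕ)
    (hc : PowerSeries.coeff i
      (psubst (PowerSeries.X ^ v₀) (PowerSeries.X ^ v₁) h) ≠ 0) :
    ∃ p q : ℕ, i = v₀ * p + v₁ * q := by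
  rw [psubst, PowerSeries.coeff_mk] at hc
  obtain ⟨⟨p, q⟩, _, hne⟩ := Finset.exists_ne_zero_of_sum_ne_zero hc
  refine ⟨p, q, ?_⟩
  by_contra hne2
  apply hne
  rw [← pow_mul, ← pow_mul, ← pow_add, PowerSeries.coeff_X_pow, if_neg hne2, mul_zero]

lemma term_support (v₀ v₁ v : ℕ) (h : MvPowerSeries (Fin 2) ℂ) (n : ℕ)
    (hc : PowerSeries.coeff n
      (psubst (PowerSeries.X ^ v₀) (PowerSeries.X ^ v₁) h *
        (PowerSeries.X ^ v : PowerSeries ℂ).derivativeFun) ≠ 0) :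
    ∃ p q : ℕ, n + 1 = v₀ * p + v₁ * q + v := by
  rw [PowerSeries.coeff_mul] at hc
  obtain ⟨⟨i, j⟩, hij, hne⟩ := Finset.exists_ne_zero_of_sum_ne_zero hc
  rw [Finset.HasAntidiagonal.mem_antidiagonal] at hij
  have hA : PowerSeries.coeff i (psubst (PowerSeries.X ^ v₀) (PowerSeries.X ^ v₁) h) ≠ 0 :=
    fun e => hne (by simp [e])
  have hD : PowerSeries.coeff j ((PowerSeries.X ^ v : PowerSeries ℂ)).derivativeFun ≠ 0 :=
    fun e => hne (by simp [e])
  rw [show (PowerSeries.X ^ v : PowerSeries ℂ).derivativeFun = PowerSeries.derivative ℂ (PowerSeries.X ^ v) from rfl,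
    PowerSeries.coeff_derivative, PowerSeries.coeff_X_pow] at hD
  have hj : j + 1 = v := by
    by_contra hj
    rw [if_neg hj, zero_mul] at hD
    exact hD rfl
  obtain ⟨p, q, hi⟩ := psubst_coeff_support v₀ v₁ h i hA
  exact ⟨p, q, by omega⟩

/-- For the monomial parametrization `φ(t) = (t^{v₀}, t^{v₁})` with `gcd(v₀,v₁) = 1`,
`Λ_φ \ Γ_φ = ∅`: every value of a differential with nonzero pullback lies in `⟨v₀, v₁⟩`. -/
theorem monomial_lambda_sub_gamma_empty (v₀ v₁ : ℕ) (h0 : 0 < v₀) (h01 : v₀ < v₁)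
    (hcop : Nat.Coprime v₀ v₁) :
    ∀ h g : MvPowerSeries (Fin 2) ℂ,
      psubst (PowerSeries.X ^ v₀) (PowerSeries.X ^ v₁) h *
          (PowerSeries.X ^ v₀ : PowerSeries ℂ).derivativeFun +
        psubst (PowerSeries.X ^ v₀) (PowerSeries.X ^ v₁) g *
          (PowerSeries.X ^ v₁ : PowerSeries ℂ).derivativeFun ≠ 0 →
      ∃ a b : ℕ,
        (psubst (PowerSeries.X ^ v₀) (PowerSeries.X ^ v₁) h *
            (PowerSeries.X ^ v₀ : PowerSeries ℂ).derivativeFun +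
          psubst (PowerSeries.X ^ v₀) (PowerSeries.X ^ v₁) g *
            (PowerSeries.X ^ v₁ : PowerSeries ℂ).derivativeFun).order + 1 =
          ((a * v₀ + b * v₁ : ℕ) : ℕ∞) := by
  intro h g hne
  set f := psubst (PowerSeries.X ^ v₀) (PowerSeries.X ^ v₁) h *
          (PowerSeries.X ^ v₀ : PowerSeries ℂ).derivativeFun +
        psubst (PowerSeries.X ^ v₀) (PowerSeries.X ^ v₁) g *
          (PowerSeries.X ^ v₁ : PowerSeries ℂ).derivativeFun with hf
  have hfin : f.order < ⊤ := PowerSeries.order_finite_iff_ne_zero.2 hne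
  obtain ⟨n, hn⟩ := WithTop.ne_top_iff_exists.1 hfin.ne
  have hc : PowerSeries.coeff n f ≠ 0 := by
    have := PowerSeries.coeff_order hne
    rwa [show f.order.toNat = n from by
      apply_fun ((↑) : ℕ → ℕ∞)
      · simp [← hn]; exact ENat.toNat_coe n
      · exact Nat.cast_injective] at this
  have hc' : PowerSeries.coeff n
      (psubst (PowerSeries.X ^ v₀) (PowerSeries.X ^ v₁) h *
        (PowerSeries.X ^ v₀ : PowerSeries ℂ).derivativeFun) ≠ 0 ∨
      PowerSeries.coeff n
      (psubst (PowerSeries.X ^ v₀) (PowerSeries.X ^ v₁) g *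
        (PowerSeries.X ^ v₁ : PowerSeries ℂ).derivativeFun) ≠ 0 := by
    by_contra hcon
    push_neg at hcon
    apply hc
    rw [hf, map_add, hcon.1, hcon.2, add_zero]
  rcases hc' with h1 | h2
  · obtain ⟨p, q, hpq⟩ := term_support v₀ v₁ v₀ h n h1
    refine ⟨p + 1, q, ?_⟩
    have key : (p + 1) * v₀ + q * v₁ = n + 1 := by rw [hpq]; ring
    rw [← hn, key]
    push_cast
    ring_nf
    exact add_comm _ _

  · obtain ⟨p, q, hpq⟩ := term_support v₀ v₁ v₁ g n h2
    refine ⟨p, q + 1, ?_⟩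
    have key : p * v₀ + (q + 1) * v₁ = n + 1 := by rw [hpq]; ring
    rw [← hn, key]
    push_cast
    ring_nf
    exact add_comm _ _
end

section
/- (Elimination Criterion EC1, arithmetic core) Let φ(t) = (t^{v₀}, t^{v₁} + Σ_{i>v₁} a_i t^i) with gcd conditions as in a Puiseux parametrization, and let j > v₁ with j ∈ Γ_φ. Then there exists q ∈ ℂ⟦X,Y⟧ with v_φ(q) = j such that the parametrization φ₁(t) = (t^{v₀}, y(t) − c·q(t^{v₀}, y(t))) for suitable c ∈ ℂ has coefficients a'_i = a_i for v₁ < i < j and a'_j = 0. -/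
open PowerSeries

/-- Elimination Criterion EC1 (arithmetic core): if `j > v₁` lies in the semigroup of values
of `φ(t) = (t^{v₀}, y(t))`, then there is `q ∈ ℂ⟦X,Y⟧` with `v_φ(q) = j` and `c ∈ ℂ` such that
`y − c·q(φ(t))` has the same coefficients `a_i` for `v₁ < i < j` and vanishing coefficient
at `t^j`. -/
theorem elimination_criterion_EC1 (v₀ v₁ : ℕ) (h0 : 0 < v₀) (h01 : v₀ < v₁)
    (hnd : ¬ v₀ ∣ v₁) (y : PowerSeries ℂ)
    (hy1 : PowerSeries.coeff v₁ y = 1)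
    (hylt : ∀ i, i < v₁ → PowerSeries.coeff i y = 0)
    (j : ℕ) (hj : v₁ < j)
    (hjΓ : ∃ h : MvPowerSeries (Fin 2) ℂ,
      psubst (PowerSeries.X ^ v₀) y h ≠ 0 ∧
      (psubst (PowerSeries.X ^ v₀) y h).order = (j : ℕ∞)) :
    ∃ (q : MvPowerSeries (Fin 2) ℂ) (c : ℂ),
      psubst (PowerSeries.X ^ v₀) y q ≠ 0 ∧
      (psubst (PowerSeries.X ^ v₀) y q).order = (j : ℕ∞) ∧
      (∀ i, v₁ < i → i < j →
        PowerSeries.coeff i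
            (y - PowerSeries.C c * psubst (PowerSeries.X ^ v₀) y q) =
          PowerSeries.coeff i y) ∧
      PowerSeries.coeff j
          (y - PowerSeries.C c * psubst (PowerSeries.X ^ v₀) y q) = 0 := by
  obtain ⟨h, hne, hord⟩ := hjΓ
  set s := psubst (PowerSeries.X ^ v₀) y h with hs
  have hcoeffj : PowerSeries.coeff j s ≠ 0 := by
    intro hz
    have := PowerSeries.order_eq_nat.mp hord
    exact this.1 hz
  refine ⟨h, PowerSeries.coeff j y / PowerSeries.coeff j s, hne, hord, ?_, ?_⟩
  · intro i hi1 hij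
    have hlt : (i : ℕ∞) < s.order := by rw [hord]; exact_mod_cast hij
    have hz : PowerSeries.coeff i s = 0 := PowerSeries.coeff_of_lt_order i hlt
    simp [map_sub, PowerSeries.coeff_C_mul, hz]
    exact Or.inr hz
  · have : PowerSeries.coeff j (PowerSeries.C (PowerSeries.coeff j y / PowerSeries.coeff j s) * s) = PowerSeries.coeff j y := by
      rw [PowerSeries.coeff_C_mul]
      field_simp
    simp [map_sub, this]
    rw [PowerSeries.coeff_C_mul] at this
    exact sub_eq_zero.mpr this.symm
end

section
/- Let φ(t) = (t^{v₀}, y(t)) and φ₁(t₁) = (t₁^{v₀}, y₁(t₁)) be two Puiseux parametrizations (ord y = ord y₁ = v₁, leading coefficients 1). Suppose σ(X,Y) = (r^{v₀}X + p, r^{v₁}Y + q) with r ∈ ℂ*, p, q ∈ ℂ⟦X,Y⟧, v_φ(p) > v₀, v_φ(q) > v₁, and ρ(t) = r·t·(1 + φ*(p)/(r^{v₀}t^{v₀}))^{1/v₀}. Then ρ is a well-defined automorphism of (ℂ,0) (i.e., ρ ∈ t·ℂ⟦t⟧ with ρ'(0) = r ≠ 0) and (σ ∘ φ ∘ ρ^{-1})(t₁)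 has first coordinate exactly t₁^{v₀}. -/
open PowerSeries

/-- Key lemma: if `s - s' = X^n * w` and both have constant term 1, then for every `m`
the `n`-th coefficients of `s^m` and `s'^m` differ by `m * w₀`. -/
lemma coeff_pow_diff (n : ℕ) (s s' w : PowerSeries ℂ)
    (h0 : PowerSeries.constantCoeff s = 1) (h0' : PowerSeries.constantCoeff s' = 1)
    (hw : s - s' = PowerSeries.X ^ n * w) :
    ∀ m : ℕ, PowerSeries.coeff n (s ^ m) =
      PowerSeries.coeff n (s' ^ m) + m * PowerSeries.constantCoeff w := by
  intro m
  induction m with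
  | zero => simp
  | succ m ih =>
    obtain ⟨V, hV⟩ := sub_dvd_pow_sub_pow s s' m
    obtain ⟨V', hV'⟩ : ∃ V', s ^ m - s' ^ m = PowerSeries.X ^ n * V' :=
      ⟨w * V, by rw [hV, hw]; ring⟩
    have key : s ^ (m + 1) - s' ^ (m + 1)
        = PowerSeries.X ^ n * (s ^ m * w + V' * s') := by
      have : s ^ (m + 1) - s' ^ (m + 1) = s ^ m * (s - s') + (s ^ m - s' ^ m) * s' := by ring
      rw [this, hw, hV']; ring
    have hc : PowerSeries.coeff n (s ^ (m + 1)) - PowerSeries.coeff n (s' ^ (m + 1))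
        = PowerSeries.coeff 0 (s ^ m * w + V' * s') := by
      rw [← map_sub, key]
      have := PowerSeries.coeff_X_pow_mul (s ^ m * w + V' * s') n 0
      rwa [zero_add] at this
    have hV'0 : PowerSeries.coeff 0 V' = m * PowerSeries.constantCoeff w := by
      have h1 : PowerSeries.coeff n (s ^ m - s' ^ m) = PowerSeries.coeff 0 V' := by
        rw [hV']
        have := PowerSeries.coeff_X_pow_mul V' n 0
        rwa [zero_add] at this
      rw [map_sub] at h1
      rw [← h1, ih]; ring
    have hc0 : PowerSeries.coeff 0 (s ^ m * w + V' * s')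
        = (m + 1 : ℕ) * PowerSeries.constantCoeff w := by
      simp only [map_add, PowerSeries.coeff_zero_eq_constantCoeff, map_mul, map_pow, h0, h0',
        one_pow, one_mul, mul_one]
      rw [← PowerSeries.coeff_zero_eq_constantCoeff] at hV'0 ⊢
      rw [hV'0]
      push_cast; ring
    have := hc
    rw [hc0] at this
    linear_combination this

/-- Coefficients of the `m`-th root of a power series with constant term 1. -/
noncomputable def rootCoeff (m : ℕ) (g : PowerSeries ℂ) : ℕ → ℂ
  | 0 => 1
  | n + 1 =>
    (PowerSeries.coeff (n + 1) g -
      PowerSeries.coeff (n + 1)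
        ((PowerSeries.mk fun i => if h : i < n + 1 then rootCoeff m g i else 0) ^ m)) / m
  termination_by n => n
  decreasing_by exact h

/-- Existence of `m`-th roots of power series with constant term 1 over `ℂ`. -/
lemma exists_pow_root (m : ℕ) (hm : 0 < m) (g : PowerSeries ℂ)
    (hg : PowerSeries.constantCoeff g = 1) :
    ∃ s : PowerSeries ℂ, PowerSeries.constantCoeff s = 1 ∧ s ^ m = g := by
  set s : PowerSeries ℂ := PowerSeries.mk (rootCoeff m g) with hs
  have hs0 : PowerSeries.constantCoeff s = 1 := by
    simp [hs, PowerSeries.coeff_zero_eq_constantCoeff.symm, rootCoeff]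
  refine ⟨s, hs0, ?_⟩
  ext n
  cases n with
  | zero =>
    rw [PowerSeries.coeff_zero_eq_constantCoeff, map_pow, hs0, one_pow, ← hg]
  | succ n =>
    set s' : PowerSeries ℂ :=
      PowerSeries.mk fun i => if h : i < n + 1 then rootCoeff m g i else 0 with hs'
    have hs'0 : PowerSeries.constantCoeff s' = 1 := by
      rw [← PowerSeries.coeff_zero_eq_constantCoeff]
      simp [hs', rootCoeff]
    have hdvd : PowerSeries.X ^ (n + 1) ∣ s - s' := by
      rw [PowerSeries.X_pow_dvd_iff]
      intro i hi
      simp [hs, hs', map_sub, PowerSeries.coeff_mk, hi, Nat.lt_succ_iff.mp hi]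
    obtain ⟨w, hw⟩ := hdvd
    have hw0 : PowerSeries.constantCoeff w = rootCoeff m g (n + 1) := by
      rw [← PowerSeries.coeff_zero_eq_constantCoeff]
      have h1 : PowerSeries.coeff (n + 1) (s - s') = PowerSeries.coeff 0 w := by
        rw [hw]
        have := PowerSeries.coeff_X_pow_mul w (n + 1) 0
        rwa [zero_add] at this
      rw [map_sub] at h1
      have h2 : PowerSeries.coeff (n + 1) s' = 0 := by
        simp [hs', PowerSeries.coeff_mk]
      have h3 : PowerSeries.coeff (n + 1) s = rootCoeff m g (n + 1) := by
        simp [hs]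
      rw [h2, h3, sub_zero] at h1
      exact h1.symm
    have hkey := coeff_pow_diff (n + 1) s s' w hs0 hs'0 hw m
    have hroot : rootCoeff m g (n + 1) =
        (PowerSeries.coeff (n + 1) g - PowerSeries.coeff (n + 1) (s' ^ m)) / m := by
      rw [rootCoeff]
    have hmne : (m : ℂ) ≠ 0 := Nat.cast_ne_zero.mpr hm.ne'
    rw [hkey, hw0, hroot]
    field_simp
    ring

/-- If `v_φ(p) > v₀` and `r ≠ 0`, then the reparametrization
`ρ(t) = r·t·(1 + φ*(p)/(r^{v₀}t^{v₀}))^{1/v₀}` is a well-defined automorphism germ of `(ℂ,0)`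
(`ρ ∈ t·ℂ⟦t⟧` with `ρ'(0) = r ≠ 0`) and satisfies `ρ(t)^{v₀} = r^{v₀}·t^{v₀} + p(φ(t))`,
so that the first coordinate of `σ ∘ φ ∘ ρ⁻¹` is exactly `t₁^{v₀}`. -/
theorem reparametrization_exists (v₀ v₁ : ℕ) (h0 : 0 < v₀) (h01 : v₀ < v₁)
    (y : PowerSeries ℂ)
    (hy1 : PowerSeries.coeff v₁ y = 1)
    (hylt : ∀ i, i < v₁ → PowerSeries.coeff i y = 0)
    (r : ℂ) (hr : r ≠ 0) (p : MvPowerSeries (Fin 2) ℂ)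
    (hp : ((v₀ : ℕ) : ℕ∞) < (psubst (PowerSeries.X ^ v₀) y p).order) :
    ∃ ρ : PowerSeries ℂ,
      PowerSeries.constantCoeff ρ = 0 ∧
      PowerSeries.coeff 1 ρ = r ∧
      ρ ^ v₀ = PowerSeries.C (r ^ v₀) * PowerSeries.X ^ v₀ +
        psubst (PowerSeries.X ^ v₀) y p := by
  set P : PowerSeries ℂ := psubst (PowerSeries.X ^ v₀) y p with hP
  have hdvd : PowerSeries.X ^ (v₀ + 1) ∣ P := by
    rw [PowerSeries.X_pow_dvd_iff]
    intro i hi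
    apply PowerSeries.coeff_of_lt_order
    refine lt_of_le_of_lt ?_ hp
    exact_mod_cast Nat.cast_le.mpr (Nat.lt_succ_iff.mp hi)
  obtain ⟨Q, hQ⟩ := hdvd
  have hrv : (r ^ v₀ : ℂ) ≠ 0 := pow_ne_zero _ hr
  set g : PowerSeries ℂ := 1 + PowerSeries.C (r ^ v₀)⁻¹ * (PowerSeries.X * Q) with hg
  have hg0 : PowerSeries.constantCoeff g = 1 := by
    simp [hg]
  obtain ⟨s, hs0, hsm⟩ := exists_pow_root v₀ h0 g hg0
  refine ⟨PowerSeries.C r * PowerSeries.X * s, ?_, ?_, ?_⟩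
  · simp
  · rw [mul_assoc, PowerSeries.coeff_C_mul, PowerSeries.coeff_succ_X_mul,
      PowerSeries.coeff_zero_eq_constantCoeff, hs0, mul_one]
  · have expand : (PowerSeries.C r * PowerSeries.X * s) ^ v₀
        = PowerSeries.C (r ^ v₀) * PowerSeries.X ^ v₀ * s ^ v₀ := by
      rw [mul_pow, mul_pow, ← map_pow]
    rw [expand, hsm, hg, hQ]
    have hCC : PowerSeries.C (r ^ v₀) * PowerSeries.C (r ^ v₀)⁻¹ = 1 := by
      rw [← map_mul, mul_inv_cancel₀ hrv, map_one]
    calc PowerSeries.C (r ^ v₀) * PowerSeries.X ^ v₀ *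
          (1 + PowerSeries.C (r ^ v₀)⁻¹ * (PowerSeries.X * Q))
        = PowerSeries.C (r ^ v₀) * PowerSeries.X ^ v₀ +
          (PowerSeries.C (r ^ v₀) * PowerSeries.C (r ^ v₀)⁻¹) *
            (PowerSeries.X ^ (v₀ + 1) * Q) := by ring
      _ = PowerSeries.C (r ^ v₀) * PowerSeries.X ^ v₀ + PowerSeries.X ^ (v₀ + 1) * Q := by
          rw [hCC, one_mul]
end

section
/- Let φ(t) = (t^{v₀}, y(t)) with y(t) = Σ_{i≥v₁} a_i t^i, a_{v₁} = 1. For any k > v₁ and b ∈ ℂ*, the vector (0, b t^k) lies in the tangent space T_φ(𝒜₁^k · φ) = { j^k((x'(t), y'(t))·ε + (φ*(g), φ*(h))) : ε ∈ t²ℂ⟦t⟧, g, h ∈ 𝔪² } if and only if there exist g, h ∈ 𝔪² ⊂ ℂ⟦X,Y⟧ with ord_t(φ*(h)·x'(t) − φ*(g)·y'(t)) = k + v₀ − 1. -/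
open PowerSeries

/-- The maximal ideal `(X, Y)` of `ℂ⟦X,Y⟧`. -/
noncomputable def mIdeal : Ideal (MvPowerSeries (Fin 2) ℂ) :=
  Ideal.span {MvPowerSeries.X 0, MvPowerSeries.X 1}

lemma mIdeal_constantCoeff {g : MvPowerSeries (Fin 2) ℂ} (hg : g ∈ mIdeal) :
    MvPowerSeries.coeff 0 g = 0 := by
  have : mIdeal ≤ RingHom.ker ((MvPowerSeries.constantCoeff : MvPowerSeries (Fin 2) ℂ →+* ℂ)) := by
    rw [mIdeal, Ideal.span_le]
    rintro f (rfl | rfl) <;> simp [RingHom.mem_ker]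
  simpa [MvPowerSeries.coeff_zero_eq_constantCoeff, RingHom.mem_ker] using this hg

lemma mIdeal_sq_coeff {g : MvPowerSeries (Fin 2) ℂ} (hg : g ∈ mIdeal ^ 2)
    (d : Fin 2 →₀ ℕ) (hd : d 0 + d 1 < 2) : MvPowerSeries.coeff d g = 0 := by
  have key : ∀ r ∈ mIdeal, ∀ s ∈ mIdeal, ∀ e : Fin 2 →₀ ℕ, e 0 + e 1 < 2 →
      MvPowerSeries.coeff e (r * s) = 0 := by
    intro r hr s hs e he
    rw [MvPowerSeries.coeff_mul]
    apply Finset.sum_eq_zero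
    rintro ⟨p, q⟩ hpq
    rw [Finset.HasAntidiagonal.mem_antidiagonal] at hpq
    rw [← hpq] at he
    simp only [Finsupp.add_apply] at he
    by_cases hp : p 0 + p 1 = 0
    · have hp0 : p = 0 := by
        ext i
        fin_cases i <;> simp_all <;> omega
      rw [hp0, mIdeal_constantCoeff hr, zero_mul]
    · have hq0 : q = 0 := by
        ext i
        fin_cases i <;> simp_all <;> omega
      rw [hq0, mIdeal_constantCoeff hs, mul_zero]
  -- build the ideal of series vanishing in degrees < 2
  let I : Ideal (MvPowerSeries (Fin 2) ℂ) :=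
  { carrier := {f | ∀ e : Fin 2 →₀ ℕ, e 0 + e 1 < 2 → MvPowerSeries.coeff e f = 0}
    add_mem' := fun hf hg e he => by simp [map_add, hf e he, hg e he]
    zero_mem' := fun e he => by simp
    smul_mem' := fun c f hf => by
      intro e he
      rw [smul_eq_mul, MvPowerSeries.coeff_mul]
      apply Finset.sum_eq_zero
      rintro ⟨p, q⟩ hpq
      rw [Finset.HasAntidiagonal.mem_antidiagonal] at hpq
      rw [← hpq] at he
      simp only [Finsupp.add_apply] at he
      rw [hf q (by omega), mul_zero] }
  have hle : mIdeal ^ 2 ≤ I := by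
    rw [pow_two, Ideal.mul_le]
    intro r hr s hs
    exact fun e he => key r hr s hs e he
  exact hle hg d hd

lemma order_y_pow (v₁ : ℕ) (y : PowerSeries ℂ)
    (hylt : ∀ i, i < v₁ → PowerSeries.coeff i y = 0) (j : ℕ) :
    ((j * v₁ : ℕ) : ℕ∞) ≤ (y ^ j).order := by
  induction j with
  | zero => simp
  | succ j ih =>
    have hy : ((v₁ : ℕ) : ℕ∞) ≤ y.order := PowerSeries.nat_le_order y v₁ hylt
    calc (((j + 1) * v₁ : ℕ) : ℕ∞) = ((j * v₁ : ℕ) : ℕ∞) + ((v₁ : ℕ) : ℕ∞) := by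
          push_cast; ring
    _ ≤ (y ^ j).order + y.order := add_le_add ih hy
    _ ≤ (y ^ j * y).order := PowerSeries.le_order_mul _ _
    _ = (y ^ (j + 1)).order := by rw [pow_succ]

lemma coeff_psubst_sq_eq_zero (v₀ v₁ : ℕ) (h0 : 0 < v₀) (h01 : v₀ < v₁)
    (y : PowerSeries ℂ) (hylt : ∀ i, i < v₁ → PowerSeries.coeff i y = 0)
    {g : MvPowerSeries (Fin 2) ℂ} (hg : g ∈ mIdeal ^ 2) (n : ℕ) (hn : n < 2 * v₀) :
    PowerSeries.coeff n (psubst (PowerSeries.X ^ v₀) y g) = 0 := by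
  rw [psubst, PowerSeries.coeff_mk]
  apply Finset.sum_eq_zero
  rintro ⟨i, j⟩ hij
  by_cases hdeg : i + j < 2
  · have := mIdeal_sq_coeff hg (Finsupp.single (0 : Fin 2) i + Finsupp.single (1 : Fin 2) j)
      (by simp [Finsupp.single_apply]; omega)
    rw [this, zero_mul]
  · push_neg at hdeg
    have horder : ((v₀ * i + v₁ * j : ℕ) : ℕ∞) ≤ (((PowerSeries.X : PowerSeries ℂ) ^ v₀) ^ i * y ^ j).order := by
      calc ((v₀ * i + v₁ * j : ℕ) : ℕ∞) = ((v₀ * i : ℕ) : ℕ∞) + ((j * v₁ : ℕ) : ℕ∞) := by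
            push_cast; ring
      _ ≤ (((PowerSeries.X : PowerSeries ℂ) ^ v₀) ^ i).order + (y ^ j).order := by
            apply add_le_add _ (order_y_pow v₁ y hylt j)
            rw [← pow_mul, PowerSeries.order_X_pow]
      _ ≤ _ := PowerSeries.le_order_mul _ _
    have hlt : n < v₀ * i + v₁ * j := by nlinarith
    rw [PowerSeries.coeff_of_lt_order n (lt_of_lt_of_le (by exact_mod_cast hlt) horder), mul_zero]

lemma psubst_C_mul (x y : PowerSeries ℂ) (c : ℂ) (g : MvPowerSeries (Fin 2) ℂ) :
    psubst x y (MvPowerSeries.C c * g) = PowerSeries.C c * psubst x y g := by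
  ext n
  rw [psubst, psubst, PowerSeries.coeff_C_mul, PowerSeries.coeff_mk, PowerSeries.coeff_mk,
    Finset.mul_sum]
  apply Finset.sum_congr rfl
  intro p _
  rw [MvPowerSeries.coeff_C_mul]
  ring

lemma deriv_X_pow (v₀ : ℕ) (h0 : 0 < v₀) :
    (PowerSeries.X ^ v₀ : PowerSeries ℂ).derivativeFun
      = PowerSeries.C (v₀ : ℂ) * PowerSeries.X ^ (v₀ - 1) := by
  ext n
  rw [show ∀ f : PowerSeries ℂ, f.derivativeFun = PowerSeries.derivative ℂ f from fun _ => rfl, PowerSeries.coeff_derivative, PowerSeries.coeff_C_mul, PowerSeries.coeff_X_pow,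
    PowerSeries.coeff_X_pow]
  by_cases h : n + 1 = v₀
  · rw [if_pos h, if_pos (by omega)]
    simp [← h]
  · rw [if_neg h, if_neg (by omega)]
    simp

lemma coeff_C_X_pow_mul (c : ℂ) (m n : ℕ) (f : PowerSeries ℂ) :
    PowerSeries.coeff n (PowerSeries.C c * PowerSeries.X ^ m * f)
      = if m ≤ n then c * PowerSeries.coeff (n - m) f else 0 := by
  rw [mul_assoc, PowerSeries.coeff_C_mul, PowerSeries.coeff_X_pow_mul']
  split_ifs <;> simp

lemma trunc_eq_zero_iff (k : ℕ) (f : PowerSeries ℂ) :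
    PowerSeries.trunc (k + 1) f = 0 ↔ ∀ n ≤ k, PowerSeries.coeff n f = 0 := by
  constructor
  · intro h n hn
    have := congrArg (fun p => Polynomial.coeff p n) h
    simpa [PowerSeries.coeff_trunc, Nat.lt_succ_iff, hn] using this
  · intro h
    ext n
    rw [PowerSeries.coeff_trunc]
    split_ifs with hn
    · exact h n (Nat.lt_succ_iff.mp hn)
    · simp

lemma trunc_eq_trunc_iff (k : ℕ) (f g : PowerSeries ℂ) :
    PowerSeries.trunc (k + 1) f = PowerSeries.trunc (k + 1) g
      ↔ ∀ n ≤ k, PowerSeries.coeff n f = PowerSeries.coeff n g := by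
  constructor
  · intro h n hn
    have := congrArg (fun p => Polynomial.coeff p n) h
    simpa [PowerSeries.coeff_trunc, Nat.lt_succ_iff, hn] using this
  · intro h
    ext n
    rw [PowerSeries.coeff_trunc, PowerSeries.coeff_trunc]
    split_ifs with hn
    · exact h n (Nat.lt_succ_iff.mp hn)
    · rfl


/-- (Lemma 3.1) For `k > v₁` and `b ≠ 0`, the vector `(0, b t^k)` lies in the tangent space
`T_φ(𝒜₁^k · φ) = { j^k((x'ε + φ*(g), y'ε + φ*(h))) : ε ∈ t²ℂ⟦t⟧, g, h ∈ 𝔪² }` iff there are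
`g, h ∈ 𝔪²` with `ord_t(φ*(h)·x' − φ*(g)·y') = k + v₀ − 1`. -/
theorem tangent_space_criterion (v₀ v₁ k : ℕ) (h0 : 0 < v₀) (h01 : v₀ < v₁) (hk : v₁ < k)
    (b : ℂ) (hb : b ≠ 0) (y : PowerSeries ℂ)
    (hy1 : PowerSeries.coeff v₁ y = 1)
    (hylt : ∀ i, i < v₁ → PowerSeries.coeff i y = 0) :
    (∃ ε : PowerSeries ℂ, (∀ i, i < 2 → PowerSeries.coeff i ε = 0) ∧
      ∃ g h : MvPowerSeries (Fin 2) ℂ, g ∈ mIdeal ^ 2 ∧ h ∈ mIdeal ^ 2 ∧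
        PowerSeries.trunc (k + 1)
            ((PowerSeries.X ^ v₀ : PowerSeries ℂ).derivativeFun * ε +
              psubst (PowerSeries.X ^ v₀) y g) = 0 ∧
        PowerSeries.trunc (k + 1)
            (y.derivativeFun * ε + psubst (PowerSeries.X ^ v₀) y h) =
          PowerSeries.trunc (k + 1) (PowerSeries.C b * PowerSeries.X ^ k)) ↔
    ∃ g h : MvPowerSeries (Fin 2) ℂ, g ∈ mIdeal ^ 2 ∧ h ∈ mIdeal ^ 2 ∧
      (psubst (PowerSeries.X ^ v₀) y h *
          (PowerSeries.X ^ v₀ : PowerSeries ℂ).derivativeFun -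
        psubst (PowerSeries.X ^ v₀) y g * y.derivativeFun).order =
        ((k + v₀ - 1 : ℕ) : ℕ∞) := by
  have hv0C : (v₀ : ℂ) ≠ 0 := Nat.cast_ne_zero.mpr h0.ne'
  rw [deriv_X_pow v₀ h0]
  set x' : PowerSeries ℂ := PowerSeries.C (v₀ : ℂ) * PowerSeries.X ^ (v₀ - 1) with hx'
  set y' : PowerSeries ℂ := y.derivativeFun with hy'
  constructor
  · rintro ⟨ε, hε, g, h, hg, hh, h1, h2⟩
    refine ⟨g, h, hg, hh, ?_⟩
    set G := psubst (PowerSeries.X ^ v₀) y g with hG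
    set H := psubst (PowerSeries.X ^ v₀) y h with hH
    rw [trunc_eq_zero_iff] at h1
    rw [trunc_eq_trunc_iff] at h2
    have hB : ∀ n ≤ k, PowerSeries.coeff n (y' * ε + H) = if n = k then b else 0 := by
      intro n hn
      rw [h2 n hn, PowerSeries.coeff_C_mul, PowerSeries.coeff_X_pow]
      split_ifs with hnk h' h' <;> simp_all
    have hid : H * x' - G * y' = x' * (y' * ε + H) - y' * (x' * ε + G) := by ring
    have hcoeff : ∀ n ≤ k + v₀ - 1, PowerSeries.coeff n (H * x' - G * y')
        = if n = k + v₀ - 1 then (v₀ : ℂ) * b else 0 := by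
      intro n hn
      rw [hid, map_sub]
      have hyA : PowerSeries.coeff n (y' * (x' * ε + G)) = 0 := by
        rw [PowerSeries.coeff_mul]
        apply Finset.sum_eq_zero
        rintro ⟨i, j⟩ hij
        rw [Finset.HasAntidiagonal.mem_antidiagonal] at hij
        simp only at hij
        by_cases hj : j ≤ k
        · rw [h1 j hj, mul_zero]
        · have hi : i + 1 < v₁ := by omega
          rw [hy', show ∀ f : PowerSeries ℂ, f.derivativeFun = PowerSeries.derivative ℂ f from fun _ => rfl, PowerSeries.coeff_derivative, hylt (i+1) hi, zero_mul, zero_mul]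
      rw [hyA, sub_zero, hx', coeff_C_X_pow_mul]
      by_cases hv : v₀ - 1 ≤ n
      · rw [if_pos hv, hB (n - (v₀ - 1)) (by omega)]
        by_cases hnk : n = k + v₀ - 1
        · rw [if_pos (by omega), if_pos hnk]
        · rw [if_neg (by omega), if_neg hnk, mul_zero]
      · rw [if_neg hv, if_neg (by omega)]
    rw [PowerSeries.order_eq_nat]
    constructor
    · rw [hcoeff (k + v₀ - 1) le_rfl, if_pos rfl]
      exact mul_ne_zero hv0C hb
    · intro i hi
      rw [hcoeff i (by omega), if_neg (by omega)]
  · rintro ⟨g, h, hg, hh, hord⟩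
    rw [PowerSeries.order_eq_nat] at hord
    obtain ⟨hc, hlow⟩ := hord
    set G := psubst (PowerSeries.X ^ v₀) y g with hG
    set H := psubst (PowerSeries.X ^ v₀) y h with hH
    set c := PowerSeries.coeff (k + v₀ - 1) (H * x' - G * y') with hcdef
    set lam := b * (v₀ : ℂ) / c with hlam
    set ε : PowerSeries ℂ := PowerSeries.mk
      (fun n => -(PowerSeries.coeff (n + (v₀ - 1)) (PowerSeries.C lam * G)) / (v₀ : ℂ))
      with hεdef
    have hGlow : ∀ n, n < 2 * v₀ → PowerSeries.coeff n G = 0 := fun n hn =>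
      coeff_psubst_sq_eq_zero v₀ v₁ h0 h01 y hylt hg n hn
    have hA : x' * ε + PowerSeries.C lam * G = 0 := by
      ext n
      rw [map_add, hx', coeff_C_X_pow_mul, map_zero]
      by_cases hv : v₀ - 1 ≤ n
      · rw [if_pos hv, hεdef, PowerSeries.coeff_mk, Nat.sub_add_cancel hv]
        field_simp
        ring
      · rw [if_neg hv, PowerSeries.coeff_C_mul, hGlow n (by omega), mul_zero, add_zero]
    refine ⟨ε, ?_, MvPowerSeries.C lam * g, MvPowerSeries.C lam * h,
      Ideal.mul_mem_left _ _ hg, Ideal.mul_mem_left _ _ hh, ?_, ?_⟩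
    · intro i hi
      rw [hεdef, PowerSeries.coeff_mk, PowerSeries.coeff_C_mul, hGlow (i + (v₀ - 1)) (by omega),
        mul_zero, neg_zero, zero_div]
    · rw [psubst_C_mul, ← hG, hA, map_zero]
    · rw [psubst_C_mul, ← hH, trunc_eq_trunc_iff]
      intro n hn
      have hcne : c ≠ 0 := hc
      have hxB : x' * (y' * ε + PowerSeries.C lam * H)
          = PowerSeries.C lam * (H * x' - G * y') := by
        have key : x' * (y' * ε + PowerSeries.C lam * H)
            - y' * (x' * ε + PowerSeries.C lam * G)
            = PowerSeries.C lam * (H * x' - G * y') := by ring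
        rw [hA, mul_zero, sub_zero] at key
        exact key
      have := congrArg (PowerSeries.coeff (n + (v₀ - 1))) hxB
      rw [hx', coeff_C_X_pow_mul, if_pos (Nat.le_add_left _ _), Nat.add_sub_cancel,
        PowerSeries.coeff_C_mul] at this
      have hrhs : lam * PowerSeries.coeff (n + (v₀ - 1)) (H * x' - G * y')
          = if n = k then b * (v₀ : ℂ) else 0 := by
        by_cases hnk : n = k
        · rw [if_pos hnk]
          have : n + (v₀ - 1) = k + v₀ - 1 := by omega
          rw [this, ← hcdef, hlam]
          field_simp
        · rw [if_neg hnk, hlow (n + (v₀ - 1)) (by omega), mul_zero]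
      rw [hrhs] at this
      have goal : PowerSeries.coeff n (y' * ε + PowerSeries.C lam * H)
          = if n = k then b else 0 := by
        apply mul_left_cancel₀ hv0C
        rw [this]
        split_ifs <;> ring
      rw [goal, PowerSeries.coeff_C_mul, PowerSeries.coeff_X_pow]
      split_ifs with h' h'' h'' <;> simp_all
end
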